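/- arXiv:math/0302231 — 3 statements merged into one kernel-verified Lean document; each statement's English description precedes it below -/
import Mathlib

section
/- Let (Ω(S),T) be a minimal substitution dynamical system with unique T-invariant Borel probability measure μ. Let u∈W(S) start with a letter e∈C and suppose uuue∈W(S). Set n_k=|S^k(u)| and Ω(n_k)={ω∈Ω(S) : ω(−n_k+l)=ω(l)=ω(n_k+l) for all 0≤l≤n_k−1}. Then limsup_{k→∞} μ(Ω(n_k)) > 0. -/
open List Filter Topology MeasureTheory

namespace SubstLR

variable {A : Type*}

/-- Apply the substitution `S` to a finite word. -/
def subst (S : A → List A) (w : List A) : List A := w.flatMap S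

/-- `iter S n w` is `S^n(w)`. -/
def iter (S : A → List A) (n : ℕ) (w : List A) : List A := (subst S)^[n] w

/-- The set `W(S)` of finite words associated to `S`. -/
def WS (S : A → List A) : Set (List A) := {w | ∃ (a : A) (n : ℕ), w <:+: iter S n [a]}

/-- `w` is a finite factor of the two-sided infinite word `ω`. -/
def IsFactor (w : List A) (ω : ℤ → A) : Prop :=
  ∃ k : ℤ, w = (List.range w.length).map fun i => ω (k + i)

/-- The subshift `Ω(S)` associated to `S`. -/
def OmegaS (S : A → List A) : Set (ℤ → A) := {ω | ∀ w, IsFactor w ω → w ∈ WS S}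

/-- The set `W(Ω(S))` of finite factors of elements of `Ω(S)`. -/
def WOmega (S : A → List A) : Set (List A) := {w | ∃ ω ∈ OmegaS S, IsFactor w ω}

/-- Condition (ℓ): `|S^n(e)| → ∞`. -/
def CondL (S : A → List A) (e : A) : Prop :=
  Tendsto (fun n => (iter S n [e]).length) atTop atTop

/-- Condition (o): every letter occurs in some `S^n(e)`. -/
def CondO (S : A → List A) (e : A) : Prop := ∀ a : A, ∃ n : ℕ, a ∈ iter S n [e]

/-- Condition (c): `W(S) = W(Ω(S))`. -/
def CondC (S : A → List A) : Prop := WS S = WOmega S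

/-- `(Ω(S),T)` is a substitution dynamical system. -/
def IsSubstSystem (S : A → List A) : Prop := (∃ e, CondL S e ∧ CondO S e) ∧ CondC S

/-- `v` occurs with bounded gaps in the set of words `W`. -/
def BddGaps (v : List A) (W : Set (List A)) : Prop :=
  ∃ L : ℕ, 0 < L ∧ ∀ w ∈ W, L ≤ w.length → v <:+: w

/-- Condition (BG) for the letter `e`. -/
def BG (S : A → List A) (e : A) : Prop := CondL S e ∧ CondO S e ∧ BddGaps [e] (WS S)

/-- The shift by `k`; `shift 1` is the map `T`. -/
def shift (k : ℤ) (ω : ℤ → A) : ℤ → A := fun n => ω (n + k)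

/-- `(Ω(S),T)` is minimal: every orbit is dense in `Ω(S)`. -/
def Minimal [TopologicalSpace A] (S : A → List A) : Prop :=
  ∀ ω ∈ OmegaS S, OmegaS S ⊆ closure {ω' | ∃ k : ℤ, ω' = shift k ω}

/-- `(Ω(S),T)` is linearly repetitive. -/
def LinRep (S : A → List A) : Prop :=
  ∃ C : ℝ, 0 < C ∧ ∀ v ∈ WS S, ∀ w ∈ WS S, C * v.length ≤ (w.length : ℝ) → v <:+: w

/-- `(Ω(S),T)` is aperiodic. -/
def Aperiodic (S : A → List A) : Prop :=
  ∀ ω ∈ OmegaS S, ∀ k : ℤ, k ≠ 0 → shift k ω ≠ ω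

/-- The set `B` of letters `a` with `limsup |S^n(a)| < ∞`. -/
def Bset (S : A → List A) : Set A := {a | ∃ M : ℕ, ∀ n, (iter S n [a]).length ≤ M}

/-- The set `C = A ∖ B`. -/
def Cset (S : A → List A) : Set A := (Bset S)ᶜ

open Classical in
/-- `tilde S w` is the word obtained from `w` by deleting all letters of `B`. -/
noncomputable def tilde (S : A → List A) (w : List A) : List A :=
  w.filter fun x => decide (x ∈ Cset S)

/-- The induced substitution `S̃`. -/
noncomputable def tildeS (S : A → List A) : A → List A := fun x => tilde S (S x)


lemma subst_append (S : A → List A) (x y : List A) :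
    subst S (x ++ y) = subst S x ++ subst S y := List.flatMap_append ..

lemma iter_append (S : A → List A) (k : ℕ) (x y : List A) :
    iter S k (x ++ y) = iter S k x ++ iter S k y := by
  induction k generalizing x y with
  | zero => rfl
  | succ k ih =>
    simp only [iter, Function.iterate_succ_apply] at *
    rw [subst_append, ih]

lemma iter_add (S : A → List A) (j k : ℕ) (w : List A) :
    iter S (j + k) w = iter S j (iter S k w) := Function.iterate_add_apply ..

lemma iter_flatMap (S : A → List A) (k : ℕ) (z : List A) :
    iter S k z = z.flatMap (fun x => iter S k [x]) := by
  induction z with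
  | nil => simp [iter, Function.iterate_fixed (show subst S [] = [] from rfl)]
  | cons b z ih =>
    have : (b :: z) = [b] ++ z := rfl
    rw [this, iter_append, ih]; simp

lemma iter_infix {S : A → List A} {w w' : List A} (k : ℕ) (h : w <:+: w') :
    iter S k w <:+: iter S k w' := by
  obtain ⟨s, t, rfl⟩ := h
  rw [iter_append, iter_append]
  exact ⟨iter S k s, iter S k t, rfl⟩

lemma mem_WS_of_infix {S : A → List A} {w w' : List A} (h : w <:+: w') (hw : w' ∈ WS S) :
    w ∈ WS S := by
  obtain ⟨a, n, h'⟩ := hw; exact ⟨a, n, h.trans h'⟩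

lemma iter_mem_WS {S : A → List A} {w : List A} (k : ℕ) (hw : w ∈ WS S) :
    iter S k w ∈ WS S := by
  obtain ⟨a, n, h⟩ := hw
  exact ⟨a, k + n, by rw [iter_add]; exact iter_infix k h⟩

section Strip
variable {F : A → List A} {Λ : ℕ} (hF : ∀ x, (F x).length ≤ Λ)

include hF in
lemma strip_prefix : ∀ (z s r : List A), z.flatMap F = s ++ r →
    ∃ z₂ r', z₂ <:+ z ∧ z₂.flatMap F = r' ∧ r' <:+ r ∧ r.length ≤ r'.length + Λ := by
  intro z
  induction z with
  | nil =>
    intro s r h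
    simp only [List.flatMap_nil] at h
    obtain ⟨hs, hr⟩ := (List.append_eq_nil_iff).mp h.symm
    exact ⟨[], [], suffix_rfl, rfl, by simp [hr], by simp [hr]⟩
  | cons b z ih =>
    intro s r h
    rw [List.flatMap_cons] at h
    rcases (List.append_eq_append_iff.mp h) with ⟨a', ha1, ha2⟩ | ⟨c', hc1, hc2⟩
    · -- s = F b ++ a', flatMap z = a' ++ r
      obtain ⟨z₂, r', h1, h2, h3, h4⟩ := ih a' r ha2
      exact ⟨z₂, r', h1.trans (List.suffix_cons b z), h2, h3, h4⟩
    · -- F b = s ++ c', r = c' ++ flatMap z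
      refine ⟨z, z.flatMap F, List.suffix_cons b z, rfl, ⟨c', hc2.symm⟩, ?_⟩
      have : c'.length ≤ Λ := by
        have := hF b
        rw [hc1] at this
        simp at this; omega
      rw [hc2]; simp; omega

include hF in
lemma strip_suffix : ∀ (z l t : List A), z.flatMap F = l ++ t →
    ∃ z₁ l', z₁ <+: z ∧ z₁.flatMap F = l' ∧ l' <+: l ∧ l.length ≤ l'.length + Λ := by
  intro z
  induction z with
  | nil =>
    intro l t h
    simp only [List.flatMap_nil] at h
    obtain ⟨hl, ht⟩ := (List.append_eq_nil_iff).mp h.symm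
    exact ⟨[], [], List.prefix_rfl, rfl, by simp [hl], by simp [hl]⟩
  | cons b z ih =>
    intro l t h
    rw [List.flatMap_cons] at h
    rcases (List.append_eq_append_iff.mp h) with ⟨a', ha1, ha2⟩ | ⟨c', hc1, hc2⟩
    · -- l = F b ++ a', flatMap z = a' ++ t
      obtain ⟨z₁, l', h1, h2, h3, h4⟩ := ih a' t ha2
      refine ⟨b :: z₁, F b ++ l', ?_, by rw [List.flatMap_cons, h2], ?_, ?_⟩
      · exact (List.cons_prefix_cons).mpr ⟨rfl, h1⟩
      · rw [ha1]
        obtain ⟨t', ht'⟩ := h3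
        exact ⟨t', by rw [List.append_assoc, ht']⟩
      · rw [ha1]; simp; omega
    · -- F b = l ++ c'
      refine ⟨[], [], List.nil_prefix, rfl, List.nil_prefix, ?_⟩
      have := hF b
      rw [hc1] at this; simp at this; omega

include hF in
lemma strip_middle {z s w t : List A} (h : z.flatMap F = s ++ w ++ t)
    (hw : 2 * Λ < w.length) :
    ∃ z', z' <:+: z ∧ z'.flatMap F <:+: w ∧ w.length ≤ (z'.flatMap F).length + 2 * Λ := by
  obtain ⟨z₂, r', hz₂, hfm, hr', hlen⟩ := strip_prefix hF z s (w ++ t) (by rw [h, List.append_assoc])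
  obtain ⟨x, hx⟩ := hr'
  -- w ++ t = x ++ r'
  rcases (List.append_eq_append_iff.mp hx.symm) with ⟨a', ha1, ha2⟩ | ⟨c', hc1, hc2⟩
  · -- x = w ++ a', t = a' ++ r' : contradiction via lengths
    exfalso
    have h1 : w.length + t.length ≤ r'.length + Λ := by
      have := hlen; simp at this ⊢; omega
    have : r'.length ≤ t.length := by rw [ha2]; simp
    omega
  · -- w = x ++ c', r' = c' ++ t
    obtain ⟨z₁, l', hz₁, hfm₁, hl', hlen₁⟩ := strip_suffix hF z₂ c' t (by rw [hfm, hc2])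
    refine ⟨z₁, ?_, ?_, ?_⟩
    · exact (hz₁.isInfix).trans hz₂.isInfix
    · rw [hfm₁]
      have h1 : l' <:+: c' := hl'.isInfix
      exact h1.trans ⟨x, [], by simp [hc1]⟩
    · have hc'len : w.length = x.length + c'.length := by rw [hc1]; simp
      have hr'len : r'.length = c'.length + t.length := by rw [hc2]; simp
      have hwt : w.length + t.length ≤ r'.length + Λ := by
        have := hlen; simp at this; omega
      rw [hfm₁]; omega

end Strip
lemma flatMap_single {α β : Type*} (l : List α) (g : α → β) :
    l.flatMap (fun a => [g a]) = l.map g := by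
  induction l with
  | nil => rfl
  | cons a l ih => simp [ih]

lemma castRange {B : Type*} (ω : ℤ → B) (p : ℤ) (m : ℕ) :
    (List.range m).map (fun i => ω (p + i)) = (List.range m).map (fun i : ℕ => ω (p + (i:ℤ))) := by
  simp only [List.pure_def, List.bind_eq_flatMap, List.map_flatMap, List.map_cons, List.map_nil,
    flatMap_single, List.map_map]
  rfl

/-- `v` occurs in `ω` at position `p`. -/
def OccAt (ω : ℤ → A) (v : List A) (p : ℤ) : Prop :=
  ∀ i : ℕ, (h : i < v.length) → ω (p + i) = v[i]

lemma occAt_iff_eq {ω : ℤ → A} {v : List A} {p : ℤ} :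
    OccAt ω v p ↔ v = (List.range v.length).map fun i : ℕ => ω (p + (i:ℤ)) := by
  constructor
  · intro h
    apply List.ext_getElem (by simp)
    intro i h1 h2
    simp only [List.getElem_map, List.getElem_range]
    exact (h i h1).symm
  · intro h i hi
    conv_rhs => rw [List.getElem_of_eq h]
    simp

lemma isFactor_iff_occAt {ω : ℤ → A} {v : List A} :
    IsFactor v ω ↔ ∃ p, OccAt ω v p := by
  unfold IsFactor
  simp only [castRange]
  exact exists_congr fun p => occAt_iff_eq.symm

lemma occAt_shift {ω : ℤ → A} {v : List A} {p j : ℤ} :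
    OccAt (shift j ω) v p ↔ OccAt ω v (p + j) := by
  unfold OccAt shift
  constructor
  · intro h i hi
    rw [add_right_comm]
    exact h i hi
  · intro h i hi
    have := h i hi
    rwa [add_right_comm] at this

lemma shift_mem_OmegaS {S : A → List A} {ω : ℤ → A} (j : ℤ) (hω : ω ∈ OmegaS S) :
    shift j ω ∈ OmegaS S := by
  intro w hw
  obtain ⟨p, hp⟩ := isFactor_iff_occAt.mp hw
  exact hω w (isFactor_iff_occAt.mpr ⟨p + j, occAt_shift.mp hp⟩)

lemma occAt_infix {ω : ℤ → A} {w v : List A} {p : ℤ} (hw : OccAt ω w p) (hv : v <:+: w) :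
    ∃ q, OccAt ω v q ∧ p ≤ q ∧ q + v.length ≤ p + w.length := by
  obtain ⟨s, t, rfl⟩ := hv
  refine ⟨p + s.length, ?_, by omega, by simp; omega⟩
  intro i hi
  have h1 : s.length + i < (s ++ v ++ t).length := by simp; omega
  have h2 := hw (s.length + i) h1
  have h3 : (s ++ v ++ t)[s.length + i]'h1 = v[i] := by
    rw [List.getElem_append_left (by simp; omega)]
    rw [List.getElem_append_right (by omega)]
    simp
  rw [h3] at h2
  have harg : p + (s.length:ℤ) + (i:ℤ) = p + ((s.length + i : ℕ) : ℤ) := by push_cast; ring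
  exact (congrArg ω harg).trans h2

lemma infix_of_occAt_within {ω : ℤ → A} {w v : List A} {p d : ℤ}
    (hw : OccAt ω w p) (hv : OccAt ω v (p + d)) (hd : 0 ≤ d)
    (hlen : d + v.length ≤ w.length) : v <:+: w := by
  set dn := d.toNat with hdn
  have hd' : (dn : ℤ) = d := Int.toNat_of_nonneg hd
  have hdw : dn + v.length ≤ w.length := by omega
  have hv' : v = (w.drop dn).take v.length := by
    apply List.ext_getElem (by simp; omega)
    intro i h1 h2
    rw [List.getElem_take, List.getElem_drop]
    have e1 := hv i h1
    have e2 := hw (dn + i) (by omega)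
    rw [← e1, ← e2]
    congr 1
    push_cast [hd']
    ring
  rw [hv']
  exact ((w.drop dn).take_prefix v.length).isInfix.trans (w.drop_suffix dn).isInfix

/-- The window of `ω` of length `n` starting at `p`. -/
def window (ω : ℤ → A) (p : ℤ) (n : ℕ) : List A :=
  (List.range n).map fun i : ℕ => ω (p + (i:ℤ))

@[simp] lemma window_length (ω : ℤ → A) (p : ℤ) (n : ℕ) : (window ω p n).length = n := by
  simp [window]

lemma occAt_window (ω : ℤ → A) (p : ℤ) (n : ℕ) : OccAt ω (window ω p n) p := by
  intro i hi
  simp only [window] at hi ⊢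
  rw [List.getElem_map, List.getElem_range]

lemma window_isFactor (ω : ℤ → A) (p : ℤ) (n : ℕ) : IsFactor (window ω p n) ω :=
  isFactor_iff_occAt.mpr ⟨p, occAt_window ω p n⟩

lemma window_mem_WS {S : A → List A} {ω : ℤ → A} (hω : ω ∈ OmegaS S) (p : ℤ) (n : ℕ) :
    window ω p n ∈ WS S :=
  hω _ (window_isFactor ω p n)

lemma window_append (ω : ℤ → A) (p : ℤ) (n₁ n₂ : ℕ) :
    window ω p (n₁ + n₂) = window ω p n₁ ++ window ω (p + n₁) n₂ := by
  unfold window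
  rw [List.range_add, List.map_append, List.map_map]
  congr 1
  apply List.map_congr_left
  intro i _
  simp only [Function.comp_apply]
  congr 1
  push_cast
  ring

lemma prefix_window_of_occAt {ω : ℤ → A} {v : List A} {p : ℤ} (h : OccAt ω v p) (X : ℕ) :
    v <+: window ω p (v.length + X) := by
  rw [window_append]
  refine ⟨window ω (p + v.length) X, ?_⟩
  congr 1
  rw [show window ω p v.length = (List.range v.length).map fun i : ℕ => ω (p + (i:ℤ)) from rfl]
  exact occAt_iff_eq.mp h

section Top
variable [TopologicalSpace A] [DiscreteTopology A]

lemma isOpen_occAt (v : List A) (p : ℤ) : IsOpen {ω : ℤ → A | OccAt ω v p} := by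
  have h : {ω : ℤ → A | OccAt ω v p} =
      ⋂ (i : Fin v.length), (fun ω : ℤ → A => ω (p + i)) ⁻¹' {v[(i:ℕ)]} := by
    ext ω
    simp only [Set.mem_iInter, Set.mem_preimage, Set.mem_singleton_iff, Set.mem_setOf_eq]
    constructor
    · intro h i; exact h i i.2
    · intro h i hi; exact h ⟨i, hi⟩
  rw [h]
  exact isOpen_iInter_of_finite fun i =>
    (continuous_apply _).isOpen_preimage _ (isOpen_discrete _)

lemma isClosed_omegaS (S : A → List A) : IsClosed (OmegaS S) := by
  rw [← isOpen_compl_iff, isOpen_iff_forall_mem_open]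
  intro ω hω
  simp only [Set.mem_compl_iff, OmegaS, Set.mem_setOf_eq, not_forall] at hω
  obtain ⟨w, hfac, hnot⟩ := hω
  obtain ⟨p, hocc⟩ := isFactor_iff_occAt.mp hfac
  refine ⟨{ω' | OccAt ω' w p}, ?_, isOpen_occAt w p, hocc⟩
  intro ω' h' hΩ
  exact hnot (hΩ w (isFactor_iff_occAt.mpr ⟨p, h'⟩))

variable [Fintype A]

lemma exists_occAt {S : A → List A} (hmin : Minimal S) (hC : CondC S)
    {v : List A} (hv : v ∈ WS S) {ω : ℤ → A} (hω : ω ∈ OmegaS S) :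
    ∃ q : ℤ, OccAt ω v q := by
  have hv' : v ∈ WOmega S := hC ▸ hv
  obtain ⟨ω₁, hω₁, hfac⟩ := hv'
  obtain ⟨p, hocc₁⟩ := isFactor_iff_occAt.mp hfac
  have hcl := hmin ω hω hω₁
  obtain ⟨ω', hU, ⟨j, rfl⟩⟩ :=
    (mem_closure_iff.mp hcl) {ω' | OccAt ω' v p} (isOpen_occAt v p) hocc₁
  exact ⟨p + j, occAt_shift.mp hU⟩

lemma syndetic {S : A → List A} (hmin : Minimal S) (hC : CondC S)
    {v : List A} (hv : v ∈ WS S) :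
    ∃ P : ℕ, ∀ ω ∈ OmegaS S, ∃ q : ℤ, q.natAbs ≤ P ∧ OccAt ω v q := by
  classical
  have h := fun (ω : OmegaS S) => exists_occAt hmin hC hv ω.2
  choose q hq using h
  have hcover : OmegaS S ⊆ ⋃ (ω : OmegaS S), {ω' | OccAt ω' v (q ω)} :=
    fun ω hω => Set.mem_iUnion.mpr ⟨⟨ω, hω⟩, hq ⟨ω, hω⟩⟩
  have hcmp : IsCompact (OmegaS S) := (isClosed_omegaS S).isCompact
  obtain ⟨t, ht⟩ := hcmp.elim_finite_subcover _ (fun ω => isOpen_occAt v (q ω)) hcover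
  refine ⟨t.sup (fun ω => (q ω).natAbs), fun ω hω => ?_⟩
  obtain ⟨ω₁, hmem⟩ := Set.mem_iUnion.mp (ht hω)
  simp only [Set.mem_iUnion, Set.mem_setOf_eq] at hmem
  obtain ⟨hω₁t, hocc⟩ := hmem
  exact ⟨q ω₁, Finset.le_sup (f := fun ω => (q ω).natAbs) hω₁t, hocc⟩

lemma uniform_occurrence {S : A → List A} (hmin : Minimal S) (hC : CondC S)
    {v : List A} (hv : v ∈ WS S) :
    ∃ R : ℕ, 0 < R ∧ ∀ w ∈ WS S, R ≤ w.length → v <:+: w := by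
  obtain ⟨P, hP⟩ := syndetic hmin hC hv
  refine ⟨2 * P + v.length + 1, by omega, fun w hw hlen => ?_⟩
  have hw' : w ∈ WOmega S := hC ▸ hw
  obtain ⟨ω, hω, hfac⟩ := hw'
  obtain ⟨p, hocc⟩ := isFactor_iff_occAt.mp hfac
  obtain ⟨q, hqabs, hoccv⟩ := hP (shift (p + P) ω) (shift_mem_OmegaS _ hω)
  have hoccv' : OccAt ω v (q + (p + P)) := occAt_shift.mp hoccv
  have hq : -(P:ℤ) ≤ q ∧ q ≤ P := by omega
  have : OccAt ω v (p + (q + P)) := by rwa [show p + (q + P) = q + (p + P) by ring]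
  exact infix_of_occAt_within hocc this (by omega) (by omega)

end Top

section Growth
variable [Fintype A]

/-- Total length of the images of all letters. -/
def sumLen (S : A → List A) [Fintype A] : ℕ := ∑ a : A, (S a).length

lemma length_subst_le (S : A → List A) (w : List A) :
    (subst S w).length ≤ w.length * sumLen S := by
  rw [subst, List.length_flatMap]
  have h := List.sum_le_card_nsmul (w.map (List.length ∘ S)) (sumLen S) ?_
  · simpa [Function.comp_def] using h
  · intro x hx
    simp only [List.mem_map, Function.comp_apply] at hx
    obtain ⟨a, _, rfl⟩ := hx
    exact Finset.single_le_sum (f := fun a => (S a).length) (fun _ _ => Nat.zero_le _)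
      (Finset.mem_univ a)

lemma length_iter_le (S : A → List A) (j : ℕ) (w : List A) :
    (iter S j w).length ≤ w.length * (sumLen S) ^ j := by
  induction j with
  | zero => simp [iter]
  | succ j ih =>
    have h1 : iter S (j+1) w = subst S (iter S j w) := Function.iterate_succ_apply' _ _ _
    calc (iter S (j+1) w).length ≤ (iter S j w).length * sumLen S := by
          rw [h1]; exact length_subst_le S _
      _ ≤ w.length * (sumLen S) ^ j * sumLen S := Nat.mul_le_mul_right _ ih
      _ = w.length * (sumLen S) ^ (j+1) := by ring

lemma two_le_sumLen {S : A → List A} (hS : IsSubstSystem S) : 2 ≤ sumLen S := by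
  obtain ⟨⟨e0, hL, _⟩, _⟩ := hS
  by_contra h
  push_neg at h
  obtain ⟨n, hn⟩ := (hL.eventually_ge_atTop 2).exists
  have h2 := length_iter_le S n [e0]
  have h3 : (sumLen S) ^ n ≤ 1 ^ n := Nat.pow_le_pow_left (by omega) n
  simp at h2 h3
  omega

lemma iter_nil (S : A → List A) (j : ℕ) : iter S j ([] : List A) = [] :=
  Function.iterate_fixed rfl j

lemma one_le_mk {S : A → List A} {e : A} (he : e ∈ Cset S) (k : ℕ) :
    1 ≤ (iter S k [e]).length := by
  by_contra h
  push_neg at h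
  have h0 : iter S k [e] = [] := List.length_eq_zero_iff.mp (by omega)
  apply he
  refine ⟨(Finset.range (k+1)).sup (fun j => (iter S j [e]).length), fun n => ?_⟩
  rcases le_or_gt n k with hn | hn
  · exact Finset.le_sup (f := fun j => (iter S j [e]).length)
      (Finset.mem_range.mpr (by omega))
  · have : iter S n [e] = [] := by
      have : n = (n - k) + k := by omega
      rw [this, iter_add, h0, iter_nil]
    simp [this]

lemma unbounded_of_mem_Cset {S : A → List A} {e : A} (he : e ∈ Cset S) (M : ℕ) :
    ∃ n, M < (iter S n [e]).length := by
  by_contra h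
  push_neg at h
  exact he ⟨M, h⟩

lemma exists_deep {S : A → List A} (hS : IsSubstSystem S) [TopologicalSpace A]
    {w : List A} (hw : w ∈ WS S) (k : ℕ) :
    ∃ a N, k ≤ N ∧ w <:+: iter S N [a] := by
  obtain ⟨a0, n0, hinf0⟩ := hw
  rcases eq_or_ne w [] with rfl | hne
  · exact ⟨a0, k, le_refl _, (iter S k [a0]).nil_infix⟩
  have hΛ := two_le_sumLen hS
  have hwΩ : w ∈ WOmega S := hS.2 ▸ (show w ∈ WS S from ⟨a0, n0, hinf0⟩)
  obtain ⟨ω, hω, hfac⟩ := hwΩ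
  obtain ⟨p, hocc⟩ := isFactor_iff_occAt.mp hfac
  set X := (sumLen S) ^ k with hX
  have hpre : w <+: window ω p (w.length + X) := prefix_window_of_occAt hocc X
  have hw'WS : window ω p (w.length + X) ∈ WS S := window_mem_WS hω p _
  obtain ⟨a, N, hinf⟩ := hw'WS
  have hlen1 : w.length + X ≤ (iter S N [a]).length := by
    have := hinf.length_le
    simpa using this
  have hlen2 : (iter S N [a]).length ≤ (sumLen S) ^ N := by
    have := length_iter_le S N [a]
    simpa using this
  have hkN : k ≤ N := by
    by_contra hc
    push_neg at hc
    have hXN : (sumLen S) ^ N < X := by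
      rw [hX]
      exact Nat.pow_lt_pow_right (by omega) hc
    have hw1 : 1 ≤ w.length := List.length_pos_iff.mpr hne
    omega
  exact ⟨a, N, hkN, hpre.isInfix.trans hinf⟩

end Growth


section Main
variable [Fintype A] [TopologicalSpace A]

lemma length_flatMap_le {F : A → List A} {Λ : ℕ} (hF : ∀ x, (F x).length ≤ Λ)
    (z : List A) : (z.flatMap F).length ≤ z.length * Λ := by
  rw [List.length_flatMap]
  have h := List.sum_le_card_nsmul (z.map (List.length ∘ F)) Λ ?_
  · simpa [Function.comp_def] using h
  · intro x hx
    simp only [List.mem_map, Function.comp_apply] at hx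
    obtain ⟨a, _, rfl⟩ := hx
    exact hF a

lemma cube_occurs {S : A → List A} (hS : IsSubstSystem S) {v₀ : List A} {R₀ Λ k : ℕ}
    (hR1 : 1 ≤ R₀) (hΛ1 : 1 ≤ Λ)
    (hR₀ : ∀ w ∈ WS S, R₀ ≤ w.length → v₀ <:+: w)
    (hΛ : ∀ x : A, (iter S k [x]).length ≤ Λ)
    {w : List A} (hw : w ∈ WS S) (hlen : (R₀ + 2) * Λ ≤ w.length) :
    iter S k v₀ <:+: w := by
  obtain ⟨a, N, hkN, hinf⟩ := exists_deep hS hw k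
  obtain ⟨s, t, hst⟩ := hinf
  have hIter : (iter S (N - k) [a]).flatMap (fun x => iter S k [x]) = s ++ w ++ t := by
    rw [← iter_flatMap, ← iter_add, show k + (N - k) = N by omega]
    exact hst.symm
  have h2Λ : 2 * Λ < w.length := by
    have h3 : 3 * Λ ≤ (R₀ + 2) * Λ := Nat.mul_le_mul_right Λ (by omega)
    omega
  obtain ⟨z', hz'inf, hz'w, hz'len⟩ := strip_middle (fun x => hΛ x) hIter h2Λ
  have hz'WS : z' ∈ WS S := ⟨a, N - k, hz'inf⟩
  have hup : (z'.flatMap (fun x => iter S k [x])).length ≤ z'.length * Λ :=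
    length_flatMap_le (fun x => hΛ x) z'
  have h6 : R₀ * Λ ≤ (z'.flatMap (fun x => iter S k [x])).length := by
    have he : (R₀ + 2) * Λ = R₀ * Λ + 2 * Λ := by ring
    omega
  have h7 : R₀ ≤ z'.length := by
    refine Nat.le_of_mul_le_mul_right ?_ (show 0 < Λ by omega)
    omega
  have h10 : iter S k v₀ <:+: iter S k z' := iter_infix k (hR₀ z' hz'WS h7)
  rw [← iter_flatMap] at hz'w
  exact h10.trans hz'w

lemma period_of_cube {S : A → List A} (e : A) (u' : List A) (k : ℕ)
    {ω : ℤ → A} {q : ℤ}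
    (hocc : OccAt ω (iter S k ((e :: u') ++ (e :: u') ++ (e :: u') ++ [e])) q) :
    ∀ x : ℤ, q ≤ x →
      x < q + (2 * (iter S k (e :: u')).length + (iter S k [e]).length) →
      ω x = ω (x + (iter S k (e :: u')).length) := by
  set wk := iter S k (e :: u') with hwk
  set fk := iter S k [e] with hfk
  set n := wk.length with hn
  set m := fk.length with hm
  have hP : iter S k ((e :: u') ++ (e :: u') ++ (e :: u') ++ [e])
      = wk ++ wk ++ wk ++ fk := by
    rw [iter_append, iter_append, iter_append]
  rw [hP] at hocc
  set P := wk ++ wk ++ wk ++ fk with hPdef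
  obtain ⟨g, hg⟩ : ∃ g, fk ++ g = wk := ⟨iter S k u', by rw [hwk, hfk, ← iter_append, List.singleton_append]⟩
  have hPlen : P.length = n + n + n + m := by simp only [hPdef, List.length_append, hn, hm]
  have hdt : P.drop n = P.take (2 * n + m) := by
    have h1 : P.drop n = wk ++ wk ++ fk := by
      rw [hPdef, show wk ++ wk ++ wk ++ fk = wk ++ (wk ++ wk ++ fk) by
        simp [List.append_assoc], hn, List.drop_left]
    have h2 : P.take (2 * n + m) = wk ++ wk ++ fk := by
      have hlen2 : 2 * n + m = (wk ++ wk).length + m := by simp only [List.length_append]; omega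
      rw [hPdef, show wk ++ wk ++ wk ++ fk = (wk ++ wk) ++ (wk ++ fk) by
        simp [List.append_assoc], hlen2, List.take_append]
      have h3 : (wk ++ fk).take m = fk := by
        rw [← hg, List.append_assoc, hm, List.take_left]
      rw [List.take_of_length_le (Nat.le_add_right _ _), Nat.add_sub_cancel_left, h3]
    rw [h1, h2]
  intro x hx1 hx2
  set l := (x - q).toNat with hl
  have hlZ : (l:ℤ) = x - q := Int.toNat_of_nonneg (by omega)
  have hlt : l < 2 * n + m := by omega
  have hltP : l < P.length := by omega
  have hltP2 : n + l < P.length := by omega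
  have hPeq : P[l]'hltP = P[n+l]'hltP2 := by
    have e1 : P[l]'hltP = (P.take (2*n+m))[l]'(by simp [List.length_take]; omega) := by
      rw [List.getElem_take]
    have e2 : (P.drop n)[l]'(by simp [List.length_drop]; omega) = P[n+l]'hltP2 := by
      rw [List.getElem_drop]
    have e5 : (P.drop n)[l]'(by simp [List.length_drop]; omega)
        = (P.take (2*n+m))[l]'(by simp [List.length_take]; omega) :=
      List.getElem_of_eq hdt _
    exact e1.trans (e5.symm.trans e2)
  have e3 := hocc l (by omega)
  have e4 := hocc (n + l) (by omega)
  calc ω x = ω (q + l) := congrArg ω (by omega)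
    _ = ω (q + (n + l : ℕ)) := by rw [e3, e4, hPeq]
    _ = ω (x + n) := congrArg ω (by push_cast; omega)

end Main


open scoped ENNReal

/-- cubes occur with positive frequency: with `n_k = |S^k(u)|`,
`limsup_k μ(Ω(n_k)) > 0`. -/
theorem statement10 {A : Type*} [Fintype A] [TopologicalSpace A] [DiscreteTopology A]
    [MeasurableSpace A] [BorelSpace A]
    (S : A → List A) (hS : IsSubstSystem S) (hmin : Minimal S)
    (μ : Measure (ℤ → A)) (hprob : IsProbabilityMeasure μ)
    (hsupp : μ (OmegaS S) = 1) (hinv : μ.map (shift 1) = μ)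
    (huniq : ∀ ν : Measure (ℤ → A), IsProbabilityMeasure ν → ν (OmegaS S) = 1 →
      ν.map (shift 1) = ν → ν = μ)
    (u : List A) (e : A) (hu : u ∈ WS S) (he : e ∈ Cset S) (hhead : u.head? = some e)
    (hcube : u ++ u ++ u ++ [e] ∈ WS S) :
    0 < Filter.limsup (fun k : ℕ =>
      μ {ω ∈ OmegaS S | ∀ l : ℕ, l < (iter S k u).length →
          ω (-((iter S k u).length : ℤ) + l) = ω l ∧
          ω l = ω (((iter S k u).length : ℤ) + l)}) atTop := by
  classical
  obtain ⟨u', rfl⟩ : ∃ u', u = e :: u' := by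
    cases u with
    | nil => simp at hhead
    | cons a t =>
      simp only [List.head?_cons, Option.some.injEq] at hhead
      exact ⟨t, by rw [hhead]⟩
  have hC : CondC S := hS.2
  have heWS : [e] ∈ WS S := mem_WS_of_infix ⟨[], u', by simp⟩ hu
  obtain ⟨R₀, hR₀pos, hR₀⟩ := uniform_occurrence hmin hC hcube
  have hletter : ∀ a : A, [a] ∈ WS S := by
    intro a
    obtain ⟨⟨e0, hL, hO⟩, -⟩ := hS
    obtain ⟨n0, hn0⟩ := hO a
    obtain ⟨s, t, hst⟩ := List.append_of_mem hn0
    exact ⟨e0, n0, ⟨s, t, by rw [hst]; simp⟩⟩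
  choose Ra hRa1 hRa2 using fun a : A => uniform_occurrence hmin hC (hletter a)
  obtain ⟨J, hJ⟩ := unbounded_of_mem_Cset he (Finset.univ.sup Ra)
  have hKa : ∀ a : A, [a] <:+: iter S J [e] := fun a =>
    hRa2 a _ (iter_mem_WS J heWS)
      (le_of_lt (lt_of_le_of_lt (Finset.le_sup (f := Ra) (Finset.mem_univ a)) hJ))
  have hΛ₁ : 2 ≤ sumLen S := two_le_sumLen hS
  set K := (sumLen S) ^ J with hKdef
  have hK1 : 1 ≤ K := Nat.one_le_pow _ _ (by omega)
  have hmk1 : ∀ k, 1 ≤ (iter S k [e]).length := fun k => one_le_mk he k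
  have hLetter : ∀ (k : ℕ) (a : A), (iter S k [a]).length ≤ K * (iter S k [e]).length := by
    intro k a
    have h1 : iter S k [a] <:+: iter S (k + J) [e] := by
      rw [iter_add]
      exact iter_infix k (hKa a)
    have h2 := h1.length_le
    have h3 : iter S (k + J) [e] = iter S J (iter S k [e]) := by
      rw [Nat.add_comm]
      exact iter_add S J k [e]
    have h4 := length_iter_le S J (iter S k [e])
    rw [h3] at h2
    calc (iter S k [a]).length ≤ (iter S k [e]).length * (sumLen S) ^ J := le_trans h2 h4
      _ = K * (iter S k [e]).length := by rw [hKdef]; ring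
  have hWordLen : ∀ (k : ℕ) (w : List A),
      (iter S k w).length ≤ w.length * (K * (iter S k [e]).length) := by
    intro k w
    rw [iter_flatMap]
    exact length_flatMap_le (fun x => hLetter k x) w
  set Cbig := (R₀ + 4 + (e :: u').length) * K with hCbig
  have hCbig1 : 1 ≤ Cbig := by
    have : 1 * 1 ≤ (R₀ + 4 + (e :: u').length) * K :=
      Nat.mul_le_mul (by omega) hK1
    omega
  -- measurability of shifts
  have hsm : ∀ j : ℤ, Measurable (shift (k := j) (A := A)) := by
    intro j
    exact measurable_pi_lambda _ fun x => measurable_pi_apply (x + j)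
  have hmap : ∀ j : ℕ, μ.map (shift ((j : ℕ) : ℤ)) = μ := by
    intro j
    induction j with
    | zero =>
      have h0 : shift (A := A) ((0:ℕ):ℤ) = id := by
        funext ω x
        simp [shift]
      rw [h0, Measure.map_id]
    | succ j ih =>
      have hco : shift (A := A) ((j+1 : ℕ):ℤ) = shift 1 ∘ shift ((j:ℕ):ℤ) := by
        funext ω x
        simp only [shift, Function.comp_apply]
        congr 1
        push_cast
        ring
      rw [hco, ← Measure.map_map (hsm 1) (hsm ((j:ℕ):ℤ)), ih, hinv]
  have hΩm : MeasurableSet (OmegaS S) := (isClosed_omegaS S).measurableSet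
  have hpair : ∀ (i j : ℤ), MeasurableSet {ω : ℤ → A | ω i = ω j} := by
    intro i j
    have huni : {ω : ℤ → A | ω i = ω j} =
        ⋃ c : A, ((fun ω : ℤ → A => ω i) ⁻¹' {c}) ∩ ((fun ω : ℤ → A => ω j) ⁻¹' {c}) := by
      ext ω
      simp only [Set.mem_setOf_eq, Set.mem_iUnion, Set.mem_inter_iff, Set.mem_preimage,
        Set.mem_singleton_iff]
      exact ⟨fun h => ⟨ω j, h, rfl⟩, fun ⟨c, h1, h2⟩ => h1.trans h2.symm⟩
    rw [huni]
    exact MeasurableSet.iUnion fun c =>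
      ((measurable_pi_apply i) (measurableSet_singleton c)).inter
        ((measurable_pi_apply j) (measurableSet_singleton c))
  -- the key uniform lower bound
  have key : ∀ k : ℕ, (Cbig : ℝ≥0∞)⁻¹ ≤
      μ {ω ∈ OmegaS S | ∀ l : ℕ, l < (iter S k (e :: u')).length →
          ω (-((iter S k (e :: u')).length : ℤ) + l) = ω l ∧
          ω l = ω (((iter S k (e :: u')).length : ℤ) + l)} := by
    intro k
    set nk := (iter S k (e :: u')).length with hnk
    set mkk := (iter S k [e]).length with hmkk
    set Λ := K * mkk with hΛdef
    have hΛ1 : 1 ≤ Λ := by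
      have := hmk1 k
      have : 1 * 1 ≤ K * mkk := Nat.mul_le_mul hK1 (by omega)
      omega
    have hΛx : ∀ x : A, (iter S k [x]).length ≤ Λ := fun x => hLetter k x
    set Pk := iter S k ((e :: u') ++ (e :: u') ++ (e :: u') ++ [e]) with hPk
    have hPlen : Pk.length = nk + nk + nk + mkk := by
      rw [hPk, iter_append, iter_append, iter_append]
      simp only [List.length_append, hnk, hmkk]
    have hnkm : nk ≤ (e :: u').length * Λ := hWordLen k (e :: u')
    have hmkΛ : mkk ≤ Λ := by
      have : 1 * mkk ≤ K * mkk := Nat.mul_le_mul_right mkk hK1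
      omega
    set G := (R₀ + 2) * Λ with hG
    set N := G + nk + mkk + 1 with hN
    set Eset := {ω : ℤ → A | ω ∈ OmegaS S ∧ ∀ l : ℕ, l < nk →
        ω (-(nk : ℤ) + l) = ω l ∧ ω l = ω ((nk : ℤ) + l)} with hEset
    have hEm : MeasurableSet Eset := by
      have hdec : Eset = OmegaS S ∩ ⋂ (l : ℕ), ⋂ (_ : l < nk),
          ({ω : ℤ → A | ω (-(nk : ℤ) + l) = ω l} ∩ {ω : ℤ → A | ω l = ω ((nk : ℤ) + l)}) := by
        ext ω
        simp only [hEset, Set.mem_setOf_eq, Set.mem_inter_iff, Set.mem_iInter]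
      rw [hdec]
      exact hΩm.inter (MeasurableSet.iInter fun l => MeasurableSet.iInter fun _ =>
        (hpair _ _).inter (hpair _ _))
    have hEinv : ∀ j : ℕ, μ (shift ((j:ℕ):ℤ) ⁻¹' Eset) = μ Eset := by
      intro j
      rw [← Measure.map_apply (hsm ((j:ℕ):ℤ)) hEm, hmap j]
    -- shifts landing in Eset
    have hgoodshift : ∀ ω ∈ OmegaS S, ∀ (q j : ℤ), OccAt ω Pk q →
        q + nk ≤ j → j ≤ q + nk + mkk → shift j ω ∈ Eset := by
      intro ω hω q j hocc hj1 hj2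
      have hper := period_of_cube e u' k (hPk ▸ hocc)
      rw [hEset]
      refine ⟨shift_mem_OmegaS j hω, ?_⟩
      intro l hl
      constructor
      · show ω ((-(nk:ℤ) + l) + j) = ω ((l:ℤ) + j)
        have h := hper (j - nk + l) (by omega) (by omega)
        calc ω ((-(nk:ℤ) + l) + j) = ω (j - nk + l) := congrArg ω (by ring)
          _ = ω ((j - nk + l) + nk) := h
          _ = ω ((l:ℤ) + j) := congrArg ω (by ring)
      · show ω ((l:ℤ) + j) = ω (((nk:ℤ) + l) + j)
        have h := hper (j + l) (by omega) (by omega)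
        calc ω ((l:ℤ) + j) = ω (j + l) := congrArg ω (by ring)
          _ = ω ((j + l) + nk) := h
          _ = ω (((nk:ℤ) + l) + j) := congrArg ω (by ring)
    -- existence of an occurrence of the cube in the initial window
    have hocc_ex : ∀ ω ∈ OmegaS S, ∃ q : ℕ, q + Pk.length ≤ G ∧ OccAt ω Pk (q:ℤ) := by
      intro ω hω
      have hwin : window ω 0 G ∈ WS S := window_mem_WS hω 0 G
      have hcube' : Pk <:+: window ω 0 G := by
        apply cube_occurs hS hR₀pos hΛ1 hR₀ hΛx hwin
        rw [window_length]
      obtain ⟨q, hq1, hq2, hq3⟩ := occAt_infix (occAt_window ω 0 G) hcube'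
      rw [window_length] at hq3
      refine ⟨q.toNat, ?_, ?_⟩
      · have hq' : (q.toNat : ℤ) = q := Int.toNat_of_nonneg hq2
        omega
      · rwa [Int.toNat_of_nonneg hq2]
    -- counting estimate
    have hcount : ∀ ω, (OmegaS S).indicator (fun _ => ((mkk + 1 : ℕ) : ℝ≥0∞)) ω ≤
        ∑ j ∈ Finset.range N, (shift ((j:ℕ):ℤ) ⁻¹' Eset).indicator 1 ω := by
      intro ω
      by_cases hω : ω ∈ OmegaS S
      · rw [Set.indicator_of_mem hω]
        obtain ⟨q, hqG, hocc⟩ := hocc_ex ω hω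
        have hsub : Finset.Icc (q + nk) (q + nk + mkk) ⊆ Finset.range N := by
          intro j hj
          simp only [Finset.mem_Icc] at hj
          simp only [Finset.mem_range]
          omega
        have hone : ∀ j ∈ Finset.Icc (q + nk) (q + nk + mkk),
            (shift ((j:ℕ):ℤ) ⁻¹' Eset).indicator (1 : (ℤ → A) → ℝ≥0∞) ω = 1 := by
          intro j hj
          simp only [Finset.mem_Icc] at hj
          have hmem : shift ((j:ℕ):ℤ) ω ∈ Eset := by
            apply hgoodshift ω hω (q:ℤ) ((j:ℕ):ℤ) hocc
            · push_cast; omega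
            · push_cast; omega
          rw [Set.indicator_of_mem (Set.mem_preimage.mpr hmem)]
          rfl
        calc ((mkk + 1 : ℕ) : ℝ≥0∞)
            = ∑ _j ∈ Finset.Icc (q + nk) (q + nk + mkk), (1 : ℝ≥0∞) := by
              rw [Finset.sum_const, Nat.card_Icc,
                show q + nk + mkk + 1 - (q + nk) = mkk + 1 from by omega]
              simp
          _ = ∑ j ∈ Finset.Icc (q + nk) (q + nk + mkk),
                (shift ((j:ℕ):ℤ) ⁻¹' Eset).indicator 1 ω := (Finset.sum_congr rfl hone).symm
          _ ≤ ∑ j ∈ Finset.range N, (shift ((j:ℕ):ℤ) ⁻¹' Eset).indicator 1 ω :=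
              Finset.sum_le_sum_of_subset hsub
      · rw [Set.indicator_of_notMem hω]
        exact zero_le
    -- integrate
    have hkey : ((mkk + 1 : ℕ) : ℝ≥0∞) ≤ (N : ℝ≥0∞) * μ Eset := by
      have h1 : ∫⁻ ω, (OmegaS S).indicator (fun _ => ((mkk + 1 : ℕ) : ℝ≥0∞)) ω ∂μ
          = ((mkk + 1 : ℕ) : ℝ≥0∞) * μ (OmegaS S) := lintegral_indicator_const hΩm _
      have h2 : ∫⁻ ω, (OmegaS S).indicator (fun _ => ((mkk + 1 : ℕ) : ℝ≥0∞)) ω ∂μ ≤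
          ∫⁻ ω, ∑ j ∈ Finset.range N, (shift ((j:ℕ):ℤ) ⁻¹' Eset).indicator 1 ω ∂μ :=
        lintegral_mono hcount
      have h3 : ∫⁻ ω, ∑ j ∈ Finset.range N, (shift ((j:ℕ):ℤ) ⁻¹' Eset).indicator 1 ω ∂μ
          = ∑ j ∈ Finset.range N, μ (shift ((j:ℕ):ℤ) ⁻¹' Eset) := by
        rw [lintegral_finset_sum]
        · exact Finset.sum_congr rfl fun j _ =>
            lintegral_indicator_one ((hsm ((j:ℕ):ℤ)) hEm)
        · exact fun j _ => (measurable_one.indicator ((hsm ((j:ℕ):ℤ)) hEm))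
      have h4 : ∑ j ∈ Finset.range N, μ (shift ((j:ℕ):ℤ) ⁻¹' Eset) = (N : ℝ≥0∞) * μ Eset := by
        rw [Finset.sum_congr rfl fun j _ => hEinv j, Finset.sum_const, Finset.card_range,
          nsmul_eq_mul]
      calc ((mkk + 1 : ℕ) : ℝ≥0∞) = ((mkk + 1 : ℕ) : ℝ≥0∞) * μ (OmegaS S) := by
            rw [hsupp, mul_one]
        _ = ∫⁻ ω, (OmegaS S).indicator (fun _ => ((mkk + 1 : ℕ) : ℝ≥0∞)) ω ∂μ := h1.symm
        _ ≤ ∫⁻ ω, ∑ j ∈ Finset.range N, (shift ((j:ℕ):ℤ) ⁻¹' Eset).indicator 1 ω ∂μ := h2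
        _ = ∑ j ∈ Finset.range N, μ (shift ((j:ℕ):ℤ) ⁻¹' Eset) := h3
        _ = (N : ℝ≥0∞) * μ Eset := h4
    have hNle : N ≤ Cbig * (mkk + 1) := by
      have hstep : N ≤ (R₀ + 4 + (e :: u').length) * Λ := by
        have hexp : (R₀ + 4 + (e :: u').length) * Λ
            = (R₀ + 2) * Λ + (e :: u').length * Λ + Λ + Λ := by ring
        omega
      have hstep2 : (R₀ + 4 + (e :: u').length) * Λ = Cbig * mkk := by
        rw [hCbig, hΛdef]; ring
      have hstep3 : Cbig * mkk ≤ Cbig * (mkk + 1) := Nat.mul_le_mul_left _ (by omega)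
      omega
    have hfinal : (Cbig : ℝ≥0∞)⁻¹ ≤ μ Eset := by
      have hNc : (N : ℝ≥0∞) ≤ ((Cbig * (mkk + 1) : ℕ) : ℝ≥0∞) := Nat.cast_le.mpr hNle
      have hkey2 : ((mkk + 1 : ℕ) : ℝ≥0∞) ≤ ((Cbig * (mkk + 1) : ℕ) : ℝ≥0∞) * μ Eset :=
        le_trans hkey (mul_le_mul_left hNc _)
      have hrw : ((Cbig * (mkk + 1) : ℕ) : ℝ≥0∞) * μ Eset
          = ((mkk + 1 : ℕ) : ℝ≥0∞) * ((Cbig : ℝ≥0∞) * μ Eset) := by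
        push_cast
        ring
      rw [hrw] at hkey2
      have hm0 : ((mkk + 1 : ℕ) : ℝ≥0∞) ≠ 0 := by
        simp
      have hminf : ((mkk + 1 : ℕ) : ℝ≥0∞) ≠ ⊤ := ENNReal.natCast_ne_top _
      have hone : (1 : ℝ≥0∞) ≤ (Cbig : ℝ≥0∞) * μ Eset := by
        have h := hkey2
        nth_rewrite 1 [show ((mkk + 1 : ℕ) : ℝ≥0∞) = ((mkk + 1 : ℕ) : ℝ≥0∞) * 1 from
          (mul_one _).symm] at h
        exact (ENNReal.mul_le_mul_iff_right hm0 hminf).mp h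
      have hC0 : (Cbig : ℝ≥0∞) ≠ 0 := by
        simp only [ne_eq, Nat.cast_eq_zero]
        omega
      have hCinf : (Cbig : ℝ≥0∞) ≠ ⊤ := ENNReal.natCast_ne_top _
      calc (Cbig : ℝ≥0∞)⁻¹ = (Cbig : ℝ≥0∞)⁻¹ * 1 := (mul_one _).symm
        _ ≤ (Cbig : ℝ≥0∞)⁻¹ * ((Cbig : ℝ≥0∞) * μ Eset) := mul_le_mul_right hone _
        _ = ((Cbig : ℝ≥0∞)⁻¹ * (Cbig : ℝ≥0∞)) * μ Eset := (mul_assoc _ _ _).symm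
        _ = 1 * μ Eset := by rw [ENNReal.inv_mul_cancel hC0 hCinf]
        _ = μ Eset := one_mul _
    exact hfinal
  have hlim : (Cbig : ℝ≥0∞)⁻¹ ≤ Filter.limsup (fun k : ℕ =>
      μ {ω ∈ OmegaS S | ∀ l : ℕ, l < (iter S k (e :: u')).length →
          ω (-((iter S k (e :: u')).length : ℤ) + l) = ω l ∧
          ω l = ω (((iter S k (e :: u')).length : ℤ) + l)}) atTop :=
    Filter.le_limsup_of_frequently_le (Filter.Frequently.of_forall key)
  have hpos : (0 : ℝ≥0∞) < (Cbig : ℝ≥0∞)⁻¹ :=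
    ENNReal.inv_pos.mpr (ENNReal.natCast_ne_top _)
  exact lt_of_lt_of_le hpos hlim


end SubstLR
end

section
/- Let (Ω,T) be a uniquely ergodic subshift over a finite alphabet A⊂ℝ with invariant probability measure μ. Let (n_k) be a sequence in ℕ with n_k→∞, and set Ω(k)={ω∈Ω : ω(−n_k+l)=ω(l)=ω(n_k+l) for all 0≤l≤n_k−1}. If limsup_{k→∞} μ(Ω(k))>0, then for μ-almost every ω∈Ω the operator H_ω has no eigenvalues. -/
open List Filter Topology MeasureTheory

namespace SubstLR

variable {A : Type*}

section SLaux

noncomputable def tm (q : ℤ → ℝ) (E : ℝ) (m : ℤ) : Matrix (Fin 2) (Fin 2) ℂ :=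
  !![(E : ℂ) - q m, -1; 1, 0]

noncomputable def tp (q : ℤ → ℝ) (E : ℝ) (a : ℤ) : ℕ → Matrix (Fin 2) (Fin 2) ℂ
  | 0 => 1
  | n + 1 => tm q E (a + n) * tp q E a n

theorem tp_det (q : ℤ → ℝ) (E : ℝ) (a : ℤ) : ∀ n, (tp q E a n).det = 1
  | 0 => by simp [tp]
  | n + 1 => by
    rw [tp, Matrix.det_mul, tp_det q E a n, mul_one, tm, Matrix.det_fin_two_of]
    ring

theorem tp_congr (q : ℤ → ℝ) (E : ℝ) (a b : ℤ) (n : ℕ)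
    (h : ∀ l : ℕ, l < n → q (a + l) = q (b + l)) : tp q E a n = tp q E b n := by
  induction n with
  | zero => rfl
  | succ n ih =>
    rw [tp, tp, tm, tm, h n (by omega), ih (fun l hl => h l (by omega))]

theorem ch2 (M : Matrix (Fin 2) (Fin 2) ℂ) (h : M.det = 1) :
    M * M = M.trace • M - 1 := by
  ext i j
  rw [Matrix.det_fin_two] at h
  fin_cases i <;> fin_cases j <;>
    simp [Matrix.mul_apply, Fin.sum_univ_two, Matrix.trace_fin_two, Matrix.one_apply] <;>
    first
      | linear_combination -h
      | linear_combination h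
      | ring1

theorem vec_step (q : ℤ → ℝ) (E : ℝ) (ψ : ℤ → ℂ)
    (hrec : ∀ n : ℤ, ψ (n + 1) + ψ (n - 1) + (q n : ℂ) * ψ n = (E : ℂ) * ψ n)
    (m : ℤ) : ![ψ (m + 1), ψ m] = (tm q E m).mulVec ![ψ m, ψ (m - 1)] := by
  funext i
  fin_cases i <;>
    simp [tm, Matrix.mulVec, dotProduct, Fin.sum_univ_two]
  linear_combination hrec m

theorem vec_prod (q : ℤ → ℝ) (E : ℝ) (ψ : ℤ → ℂ)
    (hrec : ∀ n : ℤ, ψ (n + 1) + ψ (n - 1) + (q n : ℂ) * ψ n = (E : ℂ) * ψ n)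
    (a : ℤ) : ∀ n : ℕ, ![ψ (a + n), ψ (a + n - 1)] = (tp q E a n).mulVec ![ψ a, ψ (a - 1)]
  | 0 => by simp [tp]
  | n + 1 => by
    have h1 : (a : ℤ) + (n + 1 : ℕ) = (a + n) + 1 := by push_cast; ring
    rw [h1]
    have h2 : (a + (n : ℤ)) + 1 - 1 = a + n := by ring
    rw [show (![ψ (a + n + 1), ψ (a + n + 1 - 1)] : Fin 2 → ℂ) = ![ψ (a + n + 1), ψ (a + n)] by rw [h2]]
    rw [vec_step q E ψ hrec (a + n), vec_prod q E ψ hrec a n, tp, Matrix.mulVec_mulVec]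

theorem gordon_ineq (q : ℤ → ℝ) (E : ℝ) (ψ : ℤ → ℂ)
    (hrec : ∀ n : ℤ, ψ (n + 1) + ψ (n - 1) + (q n : ℂ) * ψ n = (E : ℂ) * ψ n)
    (j : ℤ) (n : ℕ)
    (hq : ∀ l : ℕ, l < n → q (-(n : ℤ) + l + j) = q (l + j) ∧ q (l + j) = q ((n : ℤ) + l + j)) :
    ∀ i : Fin 2, ‖(![ψ j, ψ (j-1)] : Fin 2 → ℂ) i‖ ≤
      ‖(![ψ (j+n), ψ (j+n-1)] : Fin 2 → ℂ) i‖ + ‖(![ψ (j+2*n), ψ (j+2*n-1)] : Fin 2 → ℂ) i‖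
        + ‖(![ψ (j-n), ψ (j-n-1)] : Fin 2 → ℂ) i‖ := by
  set M := tp q E j n with hM
  have hdet := tp_det q E j n
  have hch := ch2 M hdet
  -- transfer matrices agree
  have hMl : tp q E (j - n) n = M := by
    apply tp_congr; intro l hl
    have := (hq l hl).1
    rw [show j - (n:ℤ) + l = -(n:ℤ) + l + j by ring, show j + (l:ℤ) = (l:ℤ) + j by ring]
    exact this
  have hMr : tp q E (j + n) n = M := by
    apply tp_congr; intro l hl
    have := (hq l hl).2
    rw [show j + (n:ℤ) + l = (n:ℤ) + l + j by ring, show j + (l:ℤ) = (l:ℤ) + j by ring]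
    exact this.symm
  set u : Fin 2 → ℂ := ![ψ j, ψ (j-1)] with hu
  set v1 : Fin 2 → ℂ := ![ψ (j+n), ψ (j+n-1)] with hv1
  set v2 : Fin 2 → ℂ := ![ψ (j+2*n), ψ (j+2*n-1)] with hv2
  set w : Fin 2 → ℂ := ![ψ (j-n), ψ (j-n-1)] with hw
  have e1 : v1 = M.mulVec u := vec_prod q E ψ hrec j n
  have e2 : v2 = M.mulVec v1 := by
    have h := vec_prod q E ψ hrec (j + n) n
    rw [hMr] at h
    rw [hv2, hv1, show j + 2*(n:ℤ) = j + n + n by ring]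
    exact h
  have e0 : u = M.mulVec w := by
    have h := vec_prod q E ψ hrec (j - n) n
    rw [hMl, show j - (n:ℤ) + (n:ℤ) = j by ring] at h
    exact h
  set t : ℂ := M.trace with ht
  -- v2 = t • v1 - u
  have r1 : v2 = t • v1 - u := by
    rw [e2, e1, Matrix.mulVec_mulVec, hch, Matrix.sub_mulVec, Matrix.smul_mulVec,
      Matrix.one_mulVec, ← e1]
  -- v1 = t • u - w
  have r2 : v1 = t • u - w := by
    rw [e1, e0, Matrix.mulVec_mulVec, hch, Matrix.sub_mulVec, Matrix.smul_mulVec,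
      Matrix.one_mulVec, ← e0]
  intro i
  rcases le_or_gt ‖t‖ 1 with hle | hgt
  · -- u i = t * v1 i - v2 i
    have : u i = t * v1 i - v2 i := by
      have := congrFun r1 i
      simp only [Pi.smul_apply, Pi.sub_apply, smul_eq_mul] at this
      linear_combination this
    calc ‖u i‖ = ‖t * v1 i - v2 i‖ := by rw [this]
      _ ≤ ‖t * v1 i‖ + ‖v2 i‖ := norm_sub_le _ _
      _ ≤ ‖v1 i‖ + ‖v2 i‖ := by
          rw [norm_mul]
          have := norm_nonneg (v1 i)
          nlinarith
      _ ≤ ‖v1 i‖ + ‖v2 i‖ + ‖w i‖ := by nlinarith [norm_nonneg (w i)]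
  · have : t * u i = v1 i + w i := by
      have := congrFun r2 i
      simp only [Pi.smul_apply, Pi.sub_apply, smul_eq_mul] at this
      linear_combination -this
    have h1 : ‖t‖ * ‖u i‖ ≤ ‖v1 i‖ + ‖w i‖ := by
      rw [← norm_mul, this]; exact norm_add_le _ _
    have h2 : ‖u i‖ ≤ ‖t‖ * ‖u i‖ := by nlinarith [norm_nonneg (u i)]
    have := norm_nonneg (v2 i)
    linarith

theorem gordon (q : ℤ → ℝ) (E : ℝ) (ψ : ℤ → ℂ)
    (hrec : ∀ n : ℤ, ψ (n + 1) + ψ (n - 1) + (q n : ℂ) * ψ n = (E : ℂ) * ψ n)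
    (hdec : Filter.Tendsto ψ Filter.cofinite (nhds 0)) (j : ℤ)
    (hG : ∀ R : ℕ, ∃ n : ℕ, R ≤ n ∧ ∀ l : ℕ, l < n →
      q (-(n : ℤ) + l + j) = q (l + j) ∧ q (l + j) = q ((n : ℤ) + l + j)) :
    ψ = 0 := by
  -- step 1: ψ j = 0 and ψ (j-1) = 0
  have key : ∀ m : ℤ, (m = j ∨ m = j - 1) → ψ m = 0 := by
    intro m hm
    by_contra hne
    set ε : ℝ := ‖ψ m‖ / 4 with hε
    have hεpos : 0 < ε := by
      have : 0 < ‖ψ m‖ := norm_pos_iff.2 hne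
      positivity
    have hfin : {x : ℤ | ¬ ‖ψ x‖ < ε}.Finite := by
      have := hdec.eventually (Metric.ball_mem_nhds (0 : ℂ) hεpos)
      rw [Filter.eventually_cofinite] at this
      convert this using 2 with x
      simp [Metric.mem_ball, dist_zero_right]
    obtain ⟨B, hB⟩ : ∃ B : ℕ, ∀ x ∈ {x : ℤ | ¬ ‖ψ x‖ < ε}, x.natAbs ≤ B := by
      obtain ⟨B, hB⟩ := (hfin.image Int.natAbs).bddAbove
      exact ⟨B, fun x hx => hB (Set.mem_image_of_mem _ hx)⟩
    have hsmall : ∀ x : ℤ, (B : ℤ) < x ∨ x < -(B : ℤ) → ‖ψ x‖ < ε := by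
      intro x hx
      by_contra h
      have := hB x (by simpa using h)
      omega
    obtain ⟨n, hn, hq⟩ := hG (B + j.natAbs + 2)
    have hineq := gordon_ineq q E ψ hrec j n hq
    have small : ∀ i : Fin 2,
        ‖(![ψ (j+n), ψ (j+n-1)] : Fin 2 → ℂ) i‖ < ε ∧
        ‖(![ψ (j+2*n), ψ (j+2*n-1)] : Fin 2 → ℂ) i‖ < ε ∧
        ‖(![ψ (j-n), ψ (j-n-1)] : Fin 2 → ℂ) i‖ < ε := by
      intro i
      fin_cases i <;>
        refine ⟨hsmall _ (by left; omega), hsmall _ (by left; omega), hsmall _ (by right; omega)⟩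
    have hlt : ‖ψ m‖ < 3 * ε := by
      rcases hm with rfl | rfl
      · have := hineq 0
        have hs := small 0
        simp only [Matrix.cons_val_zero] at this hs
        linarith [hs.1, hs.2.1, hs.2.2]
      · have := hineq 1
        have hs := small 1
        simp only [Matrix.cons_val_one, Matrix.head_cons, Matrix.cons_val_zero] at this hs
        linarith [hs.1, hs.2.1, hs.2.2]
    rw [hε] at hlt
    have : 0 < ‖ψ m‖ := norm_pos_iff.2 hne
    linarith
  have h0 : ψ j = 0 := key j (Or.inl rfl)
  have h1 : ψ (j - 1) = 0 := key (j - 1) (Or.inr rfl)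
  -- step 2: propagate
  have fwd : ∀ d : ℕ, ψ (j + d) = 0 ∧ ψ (j + d - 1) = 0 := by
    intro d
    induction d with
    | zero => simpa using ⟨h0, h1⟩
    | succ d ih =>
      constructor
      · have hr := hrec (j + d)
        rw [ih.1, ih.2] at hr
        have : ψ (j + d + 1) = 0 := by
          simpa using hr
        rw [show (j : ℤ) + (d + 1 : ℕ) = j + d + 1 by push_cast; ring]
        exact this
      · rw [show (j : ℤ) + (d + 1 : ℕ) - 1 = j + d by push_cast; ring]
        exact ih.1
  have bwd : ∀ d : ℕ, ψ (j - d) = 0 ∧ ψ (j - d - 1) = 0 := by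
    intro d
    induction d with
    | zero => simpa using ⟨h0, h1⟩
    | succ d ih =>
      constructor
      · rw [show (j : ℤ) - (d + 1 : ℕ) = j - d - 1 by push_cast; ring]
        exact ih.2
      · have hr := hrec (j - d - 1)
        rw [show (j : ℤ) - d - 1 + 1 = j - d by ring, ih.1, ih.2] at hr
        have : ψ (j - d - 1 - 1) = 0 := by simpa using hr
        rw [show (j : ℤ) - (d + 1 : ℕ) - 1 = j - d - 1 - 1 by push_cast; ring]
        exact this
  funext m
  rcases le_or_gt j m with h | h
  · have := (fwd (m - j).toNat).1
    rwa [show (j : ℤ) + ((m - j).toNat : ℤ) = m by omega] at this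
  · have := (bwd (j - m).toNat).1
    rwa [show (j : ℤ) - ((j - m).toNat : ℤ) = m by omega] at this

end SLaux

theorem shift_measurable (𝒜 : Finset ℝ) (i : ℤ) :
    Measurable (shift i : (ℤ → 𝒜) → (ℤ → 𝒜)) :=
  measurable_pi_lambda _ fun n => measurable_pi_apply (n + i)

theorem shift_shift (𝒜 : Finset ℝ) (i j : ℤ) (ω : ℤ → 𝒜) :
    shift i (shift j ω) = shift (j + i) ω := by
  funext n
  simp only [shift]
  congr 1
  ring

theorem shift_zero' (𝒜 : Finset ℝ) (ω : ℤ → 𝒜) : shift 0 ω = ω := by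
  funext n; simp [shift]

/-- Gordon-type lemma: for a uniquely ergodic subshift, if
`limsup_k μ(Ω(k)) > 0` for the cube sets `Ω(k)`, then `μ`-a.s. `H_ω` has no eigenvalues. -/
theorem statement11 (𝒜 : Finset ℝ) (Ω : Set (ℤ → 𝒜)) (hne : Ω.Nonempty)
    (hclosed : IsClosed Ω) (hinvΩ : ∀ k : ℤ, ∀ ω ∈ Ω, shift k ω ∈ Ω)
    (μ : Measure (ℤ → 𝒜)) (hprob : IsProbabilityMeasure μ) (hsupp : μ Ω = 1)
    (hinv : μ.map (shift 1) = μ)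
    (huniq : ∀ ν : Measure (ℤ → 𝒜), IsProbabilityMeasure ν → ν Ω = 1 →
      ν.map (shift 1) = ν → ν = μ)
    (nk : ℕ → ℕ) (hnk : Tendsto nk atTop atTop)
    (hpos : 0 < Filter.limsup (fun k : ℕ =>
      μ {ω ∈ Ω | ∀ l : ℕ, l < nk k →
          ω (-(nk k : ℤ) + l) = ω l ∧ ω l = ω ((nk k : ℤ) + l)}) atTop) :
    ∀ᵐ ω ∂μ, ∀ E : ℝ, ∀ ψ : ℤ → ℂ, Memℓp ψ 2 →
      (∀ n : ℤ, ψ (n + 1) + ψ (n - 1) + ((ω n : ℝ) : ℂ) * ψ n = (E : ℂ) * ψ n) →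
      ψ = 0 := by
  classical
  haveI := hprob
  have meas_shift : ∀ i : ℤ, Measurable (shift i : (ℤ → 𝒜) → (ℤ → 𝒜)) :=
    shift_measurable 𝒜
  have hΩmeas : MeasurableSet Ω := hclosed.measurableSet
  set Ek : ℕ → Set (ℤ → 𝒜) := fun k =>
    {ω ∈ Ω | ∀ l : ℕ, l < nk k →
      ω (-(nk k : ℤ) + l) = ω l ∧ ω l = ω ((nk k : ℤ) + l)} with hEkdef
  have hEkm : ∀ k, MeasurableSet (Ek k) := by
    intro k
    have heq : Ek k = Ω ∩ ⋂ (l : ℕ), ⋂ (_ : l < nk k),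
        ({ω : ℤ → 𝒜 | ω (-(nk k : ℤ) + l) = ω l} ∩
         {ω : ℤ → 𝒜 | ω l = ω ((nk k : ℤ) + l)}) := by
      ext ω
      simp only [hEkdef, Set.mem_sep_iff, Set.mem_inter_iff, Set.mem_iInter,
        Set.mem_setOf_eq]
    rw [heq]
    refine hΩmeas.inter (MeasurableSet.iInter fun l => MeasurableSet.iInter fun _ => ?_)
    have m1 : MeasurableSet {ω : ℤ → 𝒜 | ω (-(nk k : ℤ) + l) = ω l} :=
      measurableSet_eq_fun
        (f := fun ω : ℤ → 𝒜 => ω (-(nk k : ℤ) + l)) (g := fun ω : ℤ → 𝒜 => ω l)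
        (measurable_pi_apply _) (measurable_pi_apply _)
    have m2 : MeasurableSet {ω : ℤ → 𝒜 | ω (l : ℤ) = ω ((nk k : ℤ) + l)} :=
      measurableSet_eq_fun
        (f := fun ω : ℤ → 𝒜 => ω (l : ℤ)) (g := fun ω : ℤ → 𝒜 => ω ((nk k : ℤ) + l))
        (measurable_pi_apply _) (measurable_pi_apply _)
    exact m1.inter m2
  have hEkΩ : ∀ k, Ek k ⊆ Ω := fun k ω hω => hω.1
  set U : ℕ → Set (ℤ → 𝒜) := fun N => ⋃ k, ⋃ (_ : N ≤ k), Ek k with hUdef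
  have hUm : ∀ N, MeasurableSet (U N) :=
    fun N => MeasurableSet.iUnion fun k => MeasurableSet.iUnion fun _ => hEkm k
  have hUanti : Antitone U := by
    intro N M h
    exact Set.iUnion₂_mono' fun k hk => ⟨k, le_trans h hk, subset_rfl⟩
  set G0 : Set (ℤ → 𝒜) := ⋂ N, U N with hG0def
  have hG0m : MeasurableSet G0 := MeasurableSet.iInter hUm
  have hG0pos : 0 < μ G0 := by
    refine lt_of_lt_of_le hpos ?_
    rw [hUanti.measure_iInter (fun N => (hUm N).nullMeasurableSet)
      ⟨0, measure_ne_top μ _⟩]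
    refine le_iInf fun N => ?_
    refine Filter.limsup_le_of_le (by isBoundedDefault) ?_
    filter_upwards [Filter.eventually_ge_atTop N] with k hk
    exact measure_mono (Set.subset_iUnion₂ (s := fun k _ => Ek k) k hk)
  have hG0Ω : G0 ⊆ Ω := fun ω hω => by
    have := Set.mem_iInter.1 hω 0
    obtain ⟨k, _, hk⟩ := Set.mem_iUnion₂.1 this
    exact hEkΩ k hk
  set G1 : Set (ℤ → 𝒜) := ⋃ i : ℤ, shift i ⁻¹' G0 with hG1def
  have hG1m : MeasurableSet G1 := MeasurableSet.iUnion fun i => (meas_shift i) hG0m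
  have hG1pos : 0 < μ G1 := by
    refine lt_of_lt_of_le hG0pos (measure_mono ?_)
    intro ω hω
    refine Set.mem_iUnion.2 ⟨0, ?_⟩
    simpa [Set.mem_preimage, shift_zero'] using hω
  have hG1Ω : G1 ⊆ Ω := by
    intro ω hω
    obtain ⟨i, hi⟩ := Set.mem_iUnion.1 hω
    have h1 : shift i ω ∈ Ω := hG0Ω hi
    have h2 := hinvΩ (-i) _ h1
    rwa [shift_shift, add_neg_cancel, shift_zero'] at h2
  have hG1inv : (shift 1 : (ℤ → 𝒜) → (ℤ → 𝒜)) ⁻¹' G1 = G1 := by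
    ext ω
    simp only [hG1def, Set.mem_preimage, Set.mem_iUnion]
    constructor
    · rintro ⟨i, hi⟩
      rw [shift_shift] at hi
      exact ⟨1 + i, hi⟩
    · rintro ⟨i, hi⟩
      refine ⟨i - 1, ?_⟩
      rw [shift_shift, add_sub_cancel]
      exact hi
  have hμG1top : μ G1 ≠ ⊤ := measure_ne_top μ G1
  set ν : Measure (ℤ → 𝒜) := (μ G1)⁻¹ • μ.restrict G1 with hνdef
  have hνprob : IsProbabilityMeasure ν := by
    constructor
    rw [hνdef, Measure.smul_apply, Measure.restrict_apply_univ, smul_eq_mul,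
      ENNReal.inv_mul_cancel hG1pos.ne' hμG1top]
  have hνΩ : ν Ω = 1 := by
    rw [hνdef, Measure.smul_apply, Measure.restrict_apply' hG1m,
      Set.inter_eq_right.2 hG1Ω, smul_eq_mul,
      ENNReal.inv_mul_cancel hG1pos.ne' hμG1top]
  have hνinv : ν.map (shift 1) = ν := by
    have hres : (μ.restrict G1).map (shift 1) = μ.restrict G1 := by
      conv_lhs => rw [← hG1inv]
      rw [← Measure.restrict_map (meas_shift 1) hG1m, hinv]
    rw [hνdef, Measure.map_smul, hres]
  have hνμ : ν = μ := huniq ν hνprob hνΩ hνinv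
  have hμG1 : μ G1 = 1 := by
    conv_lhs => rw [← hνμ]
    rw [hνdef, Measure.smul_apply, Measure.restrict_apply_self, smul_eq_mul,
      ENNReal.inv_mul_cancel hG1pos.ne' hμG1top]
  have hμG1c : μ G1ᶜ = 0 := by
    rw [measure_compl hG1m hμG1top, hμG1, measure_univ, tsub_self]
  rw [MeasureTheory.ae_iff]
  refine measure_mono_null (fun ω hω => ?_) hμG1c
  simp only [Set.mem_compl_iff]
  intro hωG1
  apply hω
  obtain ⟨i, hi⟩ := Set.mem_iUnion.1 hωG1
  intro E ψ hψ2 heig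
  -- decay of ψ
  have hsum : Summable (fun m : ℤ => ‖ψ m‖ ^ (2 : ENNReal).toReal) :=
    hψ2.summable (by norm_num)
  have hdec : Filter.Tendsto ψ Filter.cofinite (nhds 0) := by
    rw [tendsto_zero_iff_norm_tendsto_zero]
    have h3 := hsum.tendsto_cofinite_zero.sqrt
    rw [Real.sqrt_zero] at h3
    have heqf : (fun m : ℤ => Real.sqrt (‖ψ m‖ ^ (2 : ENNReal).toReal))
        = fun m : ℤ => ‖ψ m‖ := by
      funext m
      rw [show ((2 : ENNReal).toReal) = (2 : ℝ) by norm_num, Real.rpow_two,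
        Real.sqrt_sq (norm_nonneg _)]
    rwa [heqf] at h3
  -- Gordon scales
  have hG : ∀ R : ℕ, ∃ n : ℕ, R ≤ n ∧ ∀ l : ℕ, l < n →
      ((ω (-(n : ℤ) + l + i) : ℝ)) = ((ω (l + i) : ℝ)) ∧
      ((ω (l + i) : ℝ)) = ((ω ((n : ℤ) + l + i) : ℝ)) := by
    intro R
    obtain ⟨N, hN⟩ := Filter.eventually_atTop.1 (hnk.eventually_ge_atTop R)
    have := Set.mem_iInter.1 hi N
    obtain ⟨k, hkN, hk⟩ := Set.mem_iUnion₂.1 this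
    refine ⟨nk k, hN k hkN, fun l hl => ?_⟩
    have h := hk.2 l hl
    constructor
    · exact congrArg Subtype.val h.1
    · exact congrArg Subtype.val h.2
  exact gordon (fun m => ((ω m : ℝ))) E ψ heig hdec i hG


end SubstLR
end

section
/- Let (Ω(S),T) be a minimal, aperiodic, nonprimitive substitution dynamical system over {a,b} with |S(a)|>1 and S(b)=b. Then S(a) is neither a prefix of bS(a) nor a suffix of S(a)b. Consequently, any two 1-partitions of a finite word v∈W(S) which both begin with the block S(a) (respectively, both end with the block S(a)) agree except possibly on a suffix (respectively, prefix) of length at most |S(a)b|. -/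
open List Filter Topology MeasureTheory

namespace SubstLR

variable {A : Type*}

/-- A 1-partition of a finite word `w`: `w = z₀ z₁ ⋯ z_n z_{n+1}` with `z₁,…,z_n ∈ {S(a), b}`,
`z₀` a suffix of an element of `{S(a), b}` and `z_{n+1}` a prefix of such an element. -/
def IsOnePart (S : A → List A) (a b : A) (w z0 : List A) (zs : List (List A))
    (zl : List A) : Prop :=
  w = z0 ++ zs.flatten ++ zl ∧
  (∃ x ∈ ({S a, [b]} : Set (List A)), z0 <:+ x) ∧
  (∀ z ∈ zs, z ∈ ({S a, [b]} : Set (List A))) ∧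
  (∃ x ∈ ({S a, [b]} : Set (List A)), zl <+: x)

/-- The set of cut positions of a 1-partition of a finite word. -/
def cuts (z0 : List A) (zs : List (List A)) : Set ℕ :=
  {p | ∃ i ≤ zs.length, p = z0.length + ((zs.take i).flatten).length}

/-- `S` is primitive. -/
def Primitive (S : A → List A) : Prop := ∃ r : ℕ, 0 < r ∧ ∀ x y : A, y ∈ iter S r [x]


/-! ### Auxiliary lemmas -/

theorem aux_prefix_repl (s : List A) (b : A) (k : ℕ) (hk : 1 ≤ k)
    (h : s <+: List.replicate k b ++ s) : ∀ x ∈ s, x = b := by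
  have key : ∀ n : ℕ, s <+: List.replicate (n * k) b ++ s := by
    intro n
    induction n with
    | zero => simp
    | succ n ih =>
      have h2 : List.replicate (n * k) b ++ (List.replicate k b ++ s)
          = List.replicate ((n+1) * k) b ++ s := by
        rw [← append_assoc, ← List.replicate_add]
        ring_nf
      calc s <+: List.replicate (n * k) b ++ s := ih
        _ <+: List.replicate (n * k) b ++ (List.replicate k b ++ s) := by
            exact (prefix_append_right_inj _).mpr h
        _ = List.replicate ((n+1) * k) b ++ s := h2
  have hs := key s.length
  have hlen : s.length ≤ (s.length * k) := Nat.le_mul_of_pos_right _ hk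
  have : s <+: List.replicate (s.length * k) b := by
    refine prefix_of_prefix_length_le hs (prefix_append _ _) ?_
    simpa using hlen
  intro x hx
  exact eq_of_mem_replicate (this.sublist.subset hx)

theorem aux_noShift (s : List A) (b : A) (hs : ∃ x ∈ s, x ≠ b) :
    ∀ (zs : List (List A)) (zl : List A), (∀ z ∈ zs, z = s ∨ z = [b]) →
    (zl <+: s ∨ zl <+: [b]) → ∀ k, 1 ≤ k →
    ¬ (s <+: List.replicate k b ++ (zs.flatten ++ zl)) := by
  obtain ⟨x0, hx0s, hx0⟩ := hs
  intro zs
  induction zs with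
  | nil =>
    intro zl hzs hzl k hk h
    simp only [flatten_nil, nil_append] at h
    rcases hzl with hzl | hzl
    · have h2 : s <+: List.replicate k b ++ s :=
        h.trans ((prefix_append_right_inj _).mpr hzl)
      exact hx0 (aux_prefix_repl s b k hk h2 x0 hx0s)
    · have hb : ∀ x ∈ List.replicate k b ++ zl, x = b := by
        intro x hx
        rcases mem_append.mp hx with hx | hx
        · exact eq_of_mem_replicate hx
        · have := hzl.sublist.subset hx
          simpa using this
      exact hx0 (hb x0 (h.sublist.subset hx0s))
  | cons z rest ih =>
    intro zl hzs hzl k hk h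
    rw [flatten_cons] at h
    rcases hzs z (mem_cons_self) with hz | hz
    all_goals rw [hz] at h
    · have h2 : s <+: (List.replicate k b ++ s) ++ (rest.flatten ++ zl) := by
        simpa [append_assoc] using h
      have h3 : s <+: List.replicate k b ++ s := by
        refine prefix_of_prefix_length_le h2 (prefix_append _ _) ?_
        simp
      exact hx0 (aux_prefix_repl s b k hk h3 x0 hx0s)
    · refine ih zl (fun z hz => hzs z (mem_cons_of_mem _ hz)) hzl (k+1) (by omega) ?_
      have hrep : List.replicate (k+1) b = List.replicate k b ++ [b] := by
        simpa using List.replicate_add k 1 b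
      rw [hrep]
      simpa [append_assoc] using h

theorem aux_syncStep (s : List A) (b : A) (hs : ∃ x ∈ s, x ≠ b)
    (zs zs' : List (List A)) (zl zl' : List A)
    (hzs : ∀ z ∈ zs, z = s ∨ z = [b]) (hzs' : ∀ z ∈ zs', z = s ∨ z = [b])
    (hzl : zl <+: s ∨ zl <+: [b]) (hzl' : zl' <+: s ∨ zl' <+: [b])
    (heq : zs.flatten ++ zl = zs'.flatten ++ zl')
    (hlen : s.length + 1 ≤ (zs.flatten ++ zl).length) :
    ∃ z rest rest', zs = z :: rest ∧ zs' = z :: rest' := by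
  have hslen : 1 ≤ s.length := by
    obtain ⟨x0, hx0s, _⟩ := hs
    exact length_pos_of_ne_nil (ne_nil_of_mem hx0s)
  have hzllen : ∀ (w : List A), (w <+: s ∨ w <+: [b]) → w.length ≤ s.length := by
    rintro w (hw | hw)
    · exact hw.length_le
    · have := hw.length_le; simp at this; omega
  rcases zs with _ | ⟨z, rest⟩
  · exfalso
    simp only [flatten_nil, nil_append] at hlen
    have := hzllen zl hzl; omega
  rcases zs' with _ | ⟨z', rest'⟩
  · exfalso
    simp only [flatten_nil, nil_append] at heq
    have h2 := hzllen zl' hzl'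
    rw [← heq] at h2
    omega
  rcases hzs z mem_cons_self with hz | hz <;>
    rcases hzs' z' mem_cons_self with hz' | hz'
  · exact ⟨z, rest, rest', rfl, by rw [hz, ← hz']⟩
  · exfalso
    have hpre : s <+: List.replicate 1 b ++ (rest'.flatten ++ zl') := by
      have h1 : ([b] :: rest').flatten ++ zl' = List.replicate 1 b ++ (rest'.flatten ++ zl') := by
        simp [append_assoc]
      rw [← hz'] at h1
      rw [← heq, flatten_cons, hz, append_assoc] at h1
      exact h1 ▸ prefix_append s _
    exact aux_noShift s b hs rest' zl' (fun w hw => hzs' w (mem_cons_of_mem _ hw)) hzl' 1 le_rfl hpre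
  · exfalso
    have hpre : s <+: List.replicate 1 b ++ (rest.flatten ++ zl) := by
      have h1 : ([b] :: rest).flatten ++ zl = List.replicate 1 b ++ (rest.flatten ++ zl) := by
        simp [append_assoc]
      rw [← hz] at h1
      rw [heq, flatten_cons, hz', append_assoc] at h1
      exact h1 ▸ prefix_append s _
    exact aux_noShift s b hs rest zl (fun w hw => hzs w (mem_cons_of_mem _ hw)) hzl 1 le_rfl hpre
  · exact ⟨z, rest, rest', rfl, by rw [hz, ← hz']⟩

theorem aux_cutsSub (s : List A) (b : A) (hs : ∃ x ∈ s, x ≠ b) :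
    ∀ (zs zs' : List (List A)) (zl zl' : List A),
    (∀ z ∈ zs, z = s ∨ z = [b]) → (∀ z ∈ zs', z = s ∨ z = [b]) →
    (zl <+: s ∨ zl <+: [b]) → (zl' <+: s ∨ zl' <+: [b]) →
    zs.flatten ++ zl = zs'.flatten ++ zl' →
    ∀ p : ℕ, p + (s.length + 1) ≤ (zs.flatten ++ zl).length →
    (∃ i, i ≤ zs.length ∧ p = ((zs.take i).flatten).length) →
    (∃ i, i ≤ zs'.length ∧ p = ((zs'.take i).flatten).length) := by
  intro zs
  induction zs with
  | nil =>
    intro zs' zl zl' _ _ _ _ heq p hplen hcut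
    obtain ⟨i, hi, hp⟩ := hcut
    have hi0 : i = 0 := by simpa using hi
    subst hi0
    exact ⟨0, Nat.zero_le _, by simpa using hp⟩
  | cons z rest ih =>
    intro zs' zl zl' hzs hzs' hzl hzl' heq p hplen hcut
    obtain ⟨i, hi, hp⟩ := hcut
    rcases i with _ | j
    · exact ⟨0, Nat.zero_le _, by simpa using hp⟩
    · obtain ⟨w, r, r', hr, hr'⟩ := aux_syncStep s b hs (z :: rest) zs' zl zl'
        hzs hzs' hzl hzl' heq (by omega)
      injection hr with hw hrr
      subst hw hrr hr'
      have heq2 : rest.flatten ++ zl = r'.flatten ++ zl' := by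
        rw [flatten_cons, flatten_cons, append_assoc, append_assoc] at heq
        exact append_cancel_left heq
      have hp2 : p = z.length + ((rest.take j).flatten).length := by
        rw [hp]; simp [take_cons, flatten_cons]
      have hq : ∃ i, i ≤ r'.length ∧
          ((rest.take j).flatten).length = ((r'.take i).flatten).length := by
        refine ih r' zl zl' (fun u hu => hzs u (mem_cons_of_mem _ hu))
          (fun u hu => hzs' u (mem_cons_of_mem _ hu)) hzl hzl' heq2 _ ?_ ?_
        · have : ((z :: rest).flatten ++ zl).length
              = z.length + (rest.flatten ++ zl).length := by
            simp [flatten_cons]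
          omega
        · exact ⟨j, by simpa using hi, rfl⟩
      obtain ⟨i', hi', hq'⟩ := hq
      refine ⟨i' + 1, by simpa using hi', ?_⟩
      rw [hp2, hq']
      simp [take_cons, flatten_cons]

theorem aux_subst_fix (S : A → List A) (b : A) (hSb : S b = [b])
    (w : List A) (hw : ∀ x ∈ w, x = b) : subst S w = w := by
  induction w with
  | nil => rfl
  | cons x t ih =>
    have hx : x = b := hw x mem_cons_self
    have : subst S (x :: t) = S x ++ subst S t := by simp [subst]
    rw [this, ih (fun y hy => hw y (mem_cons_of_mem _ hy)), hx, hSb]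
    rfl

theorem aux_iter_fix (S : A → List A) (b : A) (hSb : S b = [b])
    (w : List A) (hw : ∀ x ∈ w, x = b) (n : ℕ) : iter S n w = w := by
  induction n with
  | zero => rfl
  | succ n ih =>
    show (subst S)^[n+1] w = w
    rw [Function.iterate_succ_apply, aux_subst_fix S b hSb w hw]
    exact ih

theorem aux_mem_a (a b : A) (hcover : ∀ x : A, x = a ∨ x = b)
    (S : A → List A) (hL : ∃ e, CondL S e) (hSb : S b = [b]) : a ∈ S a := by
  by_contra h
  have hall : ∀ x ∈ S a, x = b := by
    intro x hx
    rcases hcover x with rfl | rfl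
    · exact absurd hx h
    · rfl
  obtain ⟨e, hLe⟩ := hL
  have hbound : ∀ n, (iter S n [e]).length ≤ (S a).length + 1 := by
    intro n
    rcases hcover e with he | he <;> subst e
    · rcases n with _ | n
      · simp [iter]
      · have h1 : iter S (n+1) [a] = iter S n (S a) := by
          show (subst S)^[n+1] [a] = (subst S)^[n] (S a)
          rw [Function.iterate_succ_apply]
          congr 1
          simp [subst]
        rw [h1, aux_iter_fix S b hSb (S a) hall]
        omega
    · rw [aux_iter_fix S b hSb [b] (by simp)]
      simp
  obtain ⟨n, hn⟩ := (hLe.eventually_ge_atTop ((S a).length + 2)).exists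
  have h2 := hbound n
  have hn' : (S a).length + 2 ≤ (iter S n [e]).length := hn
  omega

theorem aux_cutsRevIff (v z0 : List A) (zs : List (List A)) (hveq : v = z0 ++ zs.flatten)
    (p : ℕ) (hp : p ≤ v.length) :
    p ∈ cuts z0 zs ↔
      ∃ i, i ≤ ((zs.map reverse).reverse).length ∧
        v.length - p = ((((zs.map reverse).reverse).take i).flatten).length := by
  set rz := (zs.map reverse).reverse with hrz
  have hlenrz : rz.length = zs.length := by simp [hrz]
  have hml : rz.map length = (zs.map length).reverse := by
    simp [hrz, map_reverse, List.map_map, Function.comp_def]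
  set l := zs.map length with hl
  have hll : l.length = zs.length := by simp [hl]
  have hsum : ∀ i, ((zs.take i).flatten).length = (l.take i).sum := by
    intro i; rw [length_flatten, map_take]
  have hsumr : ∀ i, ((rz.take i).flatten).length = (l.reverse.take i).sum := by
    intro i; rw [length_flatten, map_take, hml]
  have hLv : v.length = z0.length + l.sum := by
    rw [hveq]; simp [length_flatten]; rfl
  have htot : ∀ i, (l.take i).sum + (l.drop i).sum = l.sum := by
    intro i; rw [← sum_append, take_append_drop]
  have hrevtake : ∀ i, (l.reverse.take (l.length - i)).sum = (l.drop i).sum := by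
    intro i; rw [← reverse_drop, sum_reverse]
  constructor
  · rintro ⟨i, hi, hpi⟩
    rw [hsum i] at hpi
    refine ⟨zs.length - i, by omega, ?_⟩
    rw [hsumr, ← hll, hrevtake i]
    have := htot i
    omega
  · rintro ⟨i, hi, hqi⟩
    rw [hsumr i] at hqi
    rw [hlenrz] at hi
    refine ⟨zs.length - i, by omega, ?_⟩
    rw [hsum]
    have h1 : (l.reverse.take (l.length - (zs.length - i))).sum = (l.drop (zs.length - i)).sum :=
      hrevtake (zs.length - i)
    have h2 : l.length - (zs.length - i) = i := by omega
    rw [h2] at h1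
    have h3 := htot (zs.length - i)
    omega

/-- `S(a)` is neither a prefix of `bS(a)` nor a suffix of `S(a)b`;
consequently two 1-partitions of `v ∈ W(S)` both beginning (resp. ending) with the block
`S(a)` agree except on a suffix (resp. prefix) of length at most `|S(a)b|`. -/
theorem statement15 {A : Type*} [Fintype A] [TopologicalSpace A] [DiscreteTopology A]
    (a b : A) (hab : a ≠ b) (hcover : ∀ x : A, x = a ∨ x = b)
    (S : A → List A) (hS : IsSubstSystem S) (hmin : Minimal S) (hap : Aperiodic S)
    (hnp : ¬ Primitive S) (hSa : 1 < (S a).length) (hSb : S b = [b]) :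
    (¬ (S a <+: b :: S a)) ∧ (¬ (S a <:+ S a ++ [b])) ∧
    (∀ v ∈ WS S, ∀ (z0 : List A) (zs : List (List A)) (zl : List A)
        (z0' : List A) (zs' : List (List A)) (zl' : List A),
      IsOnePart S a b v z0 zs zl → IsOnePart S a b v z0' zs' zl' →
      z0 = [] → zs.head? = some (S a) → z0' = [] → zs'.head? = some (S a) →
      ∀ p : ℕ, p + (S a ++ [b]).length ≤ v.length →
        (p ∈ cuts z0 zs ↔ p ∈ cuts z0' zs')) ∧
    (∀ v ∈ WS S, ∀ (z0 : List A) (zs : List (List A)) (zl : List A)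
        (z0' : List A) (zs' : List (List A)) (zl' : List A),
      IsOnePart S a b v z0 zs zl → IsOnePart S a b v z0' zs' zl' →
      zl = [] → zs.getLast? = some (S a) → zl' = [] → zs'.getLast? = some (S a) →
      ∀ p : ℕ, (S a ++ [b]).length ≤ p →
        (p ∈ cuts z0 zs ↔ p ∈ cuts z0' zs')) := by
  classical
  have hmem : a ∈ S a := aux_mem_a a b hcover S ⟨hS.1.choose, hS.1.choose_spec.1⟩ hSb
  have hsx : ∃ x ∈ S a, x ≠ b := ⟨a, hmem, hab⟩
  have part1 : ¬ (S a <+: b :: S a) := by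
    intro h
    have h' : S a <+: List.replicate 1 b ++ S a := by simpa using h
    exact hab (aux_prefix_repl (S a) b 1 le_rfl h' a hmem)
  have part2 : ¬ (S a <:+ S a ++ [b]) := by
    intro h
    have h' : (S a).reverse <+: List.replicate 1 b ++ (S a).reverse := by
      have h2 := List.reverse_prefix.mpr h
      simpa using h2
    exact hab (aux_prefix_repl ((S a).reverse) b 1 le_rfl h' a (mem_reverse.mpr hmem))
  refine ⟨part1, part2, ?_, ?_⟩
  · rintro v hv z0 zs zl z0' zs' zl' h1 h2 hz00 - hz00' - p hp
    subst hz00; subst hz00'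
    obtain ⟨hv1, -, hblocks, hzl⟩ := h1
    obtain ⟨hv2, -, hblocks', hzl'⟩ := h2
    simp only [nil_append] at hv1 hv2
    have hb1 : ∀ z ∈ zs, z = S a ∨ z = [b] := by
      intro z hz
      have := hblocks z hz
      simpa [Set.mem_insert_iff] using this
    have hb2 : ∀ z ∈ zs', z = S a ∨ z = [b] := by
      intro z hz
      have := hblocks' z hz
      simpa [Set.mem_insert_iff] using this
    have hl1 : zl <+: S a ∨ zl <+: [b] := by
      obtain ⟨x, hx, hpre⟩ := hzl
      rcases (show x = S a ∨ x = [b] by simpa [Set.mem_insert_iff] using hx) with rfl | rfl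
      · exact Or.inl hpre
      · exact Or.inr hpre
    have hl2 : zl' <+: S a ∨ zl' <+: [b] := by
      obtain ⟨x, hx, hpre⟩ := hzl'
      rcases (show x = S a ∨ x = [b] by simpa [Set.mem_insert_iff] using hx) with rfl | rfl
      · exact Or.inl hpre
      · exact Or.inr hpre
    have heq : zs.flatten ++ zl = zs'.flatten ++ zl' := by rw [← hv1, hv2]
    have hplen : p + ((S a).length + 1) ≤ (zs.flatten ++ zl).length := by
      have h3 : v.length = (zs.flatten ++ zl).length := by rw [hv1]
      have h4 : (S a ++ [b]).length = (S a).length + 1 := by simp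
      omega
    simp only [cuts, Set.mem_setOf_eq, length_nil, zero_add]
    constructor
    · rintro ⟨i, hi, hpi⟩
      exact aux_cutsSub (S a) b hsx zs zs' zl zl' hb1 hb2 hl1 hl2 heq p hplen ⟨i, hi, hpi⟩
    · rintro ⟨i, hi, hpi⟩
      refine aux_cutsSub (S a) b hsx zs' zs zl' zl hb2 hb1 hl2 hl1 heq.symm p ?_ ⟨i, hi, hpi⟩
      rw [← heq]; exact hplen
  · rintro v hv z0 zs zl z0' zs' zl' h1 h2 hzl0 - hzl0' - p hp
    subst hzl0; subst hzl0'
    obtain ⟨hv1, hz0ex, hblocks, -⟩ := h1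
    obtain ⟨hv2, hz0ex', hblocks', -⟩ := h2
    simp only [append_nil] at hv1 hv2
    have hm1 : (S a ++ [b]).length = (S a).length + 1 := by simp
    rcases le_or_gt p v.length with hple | hple
    · set s := (S a).reverse with hsdef
      have hs' : ∃ x ∈ s, x ≠ b := ⟨a, mem_reverse.mpr hmem, hab⟩
      have hb1 : ∀ z ∈ (zs.map reverse).reverse, z = s ∨ z = [b] := by
        intro z hz
        rw [mem_reverse, List.mem_map] at hz
        obtain ⟨u, hu, rfl⟩ := hz
        rcases (show u = S a ∨ u = [b] by simpa [Set.mem_insert_iff] using hblocks u hu)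
          with rfl | rfl
        · exact Or.inl rfl
        · exact Or.inr (by simp)
      have hb2 : ∀ z ∈ (zs'.map reverse).reverse, z = s ∨ z = [b] := by
        intro z hz
        rw [mem_reverse, List.mem_map] at hz
        obtain ⟨u, hu, rfl⟩ := hz
        rcases (show u = S a ∨ u = [b] by simpa [Set.mem_insert_iff] using hblocks' u hu)
          with rfl | rfl
        · exact Or.inl rfl
        · exact Or.inr (by simp)
      have hl1 : z0.reverse <+: s ∨ z0.reverse <+: [b] := by
        obtain ⟨x, hx, hsuf⟩ := hz0ex
        rcases (show x = S a ∨ x = [b] by simpa [Set.mem_insert_iff] using hx) with rfl | rfl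
        · exact Or.inl (List.reverse_prefix.mpr hsuf)
        · exact Or.inr (by simpa using List.reverse_prefix.mpr hsuf)
      have hl2 : z0'.reverse <+: s ∨ z0'.reverse <+: [b] := by
        obtain ⟨x, hx, hsuf⟩ := hz0ex'
        rcases (show x = S a ∨ x = [b] by simpa [Set.mem_insert_iff] using hx) with rfl | rfl
        · exact Or.inl (List.reverse_prefix.mpr hsuf)
        · exact Or.inr (by simpa using List.reverse_prefix.mpr hsuf)
      have hrev1 : v.reverse = (zs.map reverse).reverse.flatten ++ z0.reverse := by
        rw [hv1, reverse_append, reverse_flatten]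
      have hrev2 : v.reverse = (zs'.map reverse).reverse.flatten ++ z0'.reverse := by
        rw [hv2, reverse_append, reverse_flatten]
      have heq : (zs.map reverse).reverse.flatten ++ z0.reverse
          = (zs'.map reverse).reverse.flatten ++ z0'.reverse := by
        rw [← hrev1, hrev2]
      have hqlen : (v.length - p) + (s.length + 1)
          ≤ ((zs.map reverse).reverse.flatten ++ z0.reverse).length := by
        have h6 : ((zs.map reverse).reverse.flatten ++ z0.reverse).length = v.length := by
          rw [← hrev1, length_reverse]
        have h7 : s.length = (S a).length := by rw [hsdef, length_reverse]
        omega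
      rw [aux_cutsRevIff v z0 zs hv1 p hple, aux_cutsRevIff v z0' zs' hv2 p hple]
      constructor
      · rintro ⟨i, hi, hpi⟩
        exact aux_cutsSub s b hs' _ _ _ _ hb1 hb2 hl1 hl2 heq _ hqlen ⟨i, hi, hpi⟩
      · rintro ⟨i, hi, hpi⟩
        refine aux_cutsSub s b hs' _ _ _ _ hb2 hb1 hl2 hl1 heq.symm _ ?_ ⟨i, hi, hpi⟩
        rw [← heq]; exact hqlen
    · have hnot : ∀ (w0 : List A) (ws : List (List A)), v = w0 ++ ws.flatten →
          p ∉ cuts w0 ws := by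
        intro w0 ws hveq hmemc
        simp only [cuts, Set.mem_setOf_eq] at hmemc
        obtain ⟨i, hi, hpi⟩ := hmemc
        have hsplit : ws.flatten = (ws.take i).flatten ++ (ws.drop i).flatten := by
          rw [← flatten_append, take_append_drop]
        have h5 : v.length
            = w0.length + (((ws.take i).flatten).length + ((ws.drop i).flatten).length) := by
          rw [hveq, hsplit]; simp
        omega
      exact iff_of_false (hnot z0 zs hv1) (hnot z0' zs' hv2)


end SubstLR
end
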